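/- Let I ⊆ k[x_1,…,x_n] be an ideal and ≺ a term order. For every v ∈ ℝ^n, v ∈ C_≺(I) if and only if in_≺(in_v(g)) = in_≺(g) for every g in the reduced Gröbner basis G_≺(I). -/

import Mathlib

open MvPolynomial

/-- A term order on the monomials of `k[x_1,…,x_n]`, identified with exponent
vectors in `ℕ^n`: a strict total order with `1` smallest and compatible with
multiplication of monomials. -/
structure TermOrder (n : ℕ) : Type where
  lt : (Fin n →₀ ℕ) → (Fin n →₀ ℕ) → Prop
  irrefl : ∀ a, ¬ lt a a
  trans : ∀ a b c, lt a b → lt b c → lt a c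
  total : ∀ a b, a ≠ b → lt a b ∨ lt b a
  zero_lt : ∀ a, a ≠ 0 → lt 0 a
  add_right : ∀ a b c, lt a b → lt (a + c) (b + c)

variable {n : ℕ} {k : Type*} [Field k]

/-- The exponent of the `τ`-largest term of `f` (and `0` if `f = 0`). -/
noncomputable def TermOrder.leadExp (τ : TermOrder n) (f : MvPolynomial (Fin n) k) :
    Fin n →₀ ℕ :=
  letI := Classical.propDecidable (∃ α, α ∈ f.support ∧ ∀ β ∈ f.support, β ≠ α → τ.lt β α)
  if h : ∃ α, α ∈ f.support ∧ ∀ β ∈ f.support, β ≠ α → τ.lt β α then h.choose else 0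

/-- The initial term `in_τ(f)` : the `τ`-largest term of `f` (with coefficient). -/
noncomputable def TermOrder.initialTerm (τ : TermOrder n) (f : MvPolynomial (Fin n) k) :
    MvPolynomial (Fin n) k :=
  monomial (τ.leadExp f) (f.coeff (τ.leadExp f))

/-- The initial ideal `in_τ(I) = ⟨in_τ(f) : f ∈ I \ {0}⟩`. -/
noncomputable def TermOrder.initialIdeal (τ : TermOrder n) (I : Ideal (MvPolynomial (Fin n) k)) :
    Ideal (MvPolynomial (Fin n) k) :=
  Ideal.span {p | ∃ f ∈ I, f ≠ 0 ∧ p = τ.initialTerm f}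

/-- The `ω`-degree `⟨ω,α⟩` of a monomial exponent `α`. -/
noncomputable def wdeg (ω : Fin n → ℝ) (α : Fin n →₀ ℕ) : ℝ := ∑ i, ω i * (α i : ℝ)

/-- The initial form `in_ω(f)`: the sum of the terms of `f` whose exponents
maximize `⟨ω,·⟩`. -/
noncomputable def initialForm (ω : Fin n → ℝ) (f : MvPolynomial (Fin n) k) :
    MvPolynomial (Fin n) k :=
  letI : DecidablePred fun α : Fin n →₀ ℕ => ∀ β ∈ f.support, wdeg ω β ≤ wdeg ω α :=
    Classical.decPred _
  ∑ α ∈ f.support.filter (fun α => ∀ β ∈ f.support, wdeg ω β ≤ wdeg ω α),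
    monomial α (f.coeff α)

/-- The initial ideal `in_ω(I) = ⟨in_ω(f) : f ∈ I⟩`. -/
noncomputable def initialFormIdeal (ω : Fin n → ℝ) (I : Ideal (MvPolynomial (Fin n) k)) :
    Ideal (MvPolynomial (Fin n) k) :=
  Ideal.span {p | ∃ f ∈ I, p = initialForm ω f}

/-- `C_≺(I)`: the closure of `{u : in_u(I) = in_≺(I)}` in `ℝ^n`. -/
noncomputable def Cprec (τ : TermOrder n) (I : Ideal (MvPolynomial (Fin n) k)) :
    Set (Fin n → ℝ) :=
  closure {u : Fin n → ℝ | initialFormIdeal u I = τ.initialIdeal I}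

/-- `C_v(I)`: the closure of the equivalence class `{u : in_u(I) = in_v(I)}`. -/
noncomputable def Cv (I : Ideal (MvPolynomial (Fin n) k)) (v : Fin n → ℝ) :
    Set (Fin n → ℝ) :=
  closure {u : Fin n → ℝ | initialFormIdeal u I = initialFormIdeal v I}

/-- `F` is a face of `C`: either empty or the set of maximizers over `C` of a
linear functional. -/
def IsFaceOf (C F : Set (Fin n → ℝ)) : Prop :=
  F = ∅ ∨ ∃ w : Fin n → ℝ, F = {x ∈ C | ∀ y ∈ C, ∑ i, w i * y i ≤ ∑ i, w i * x i}

/-- The Gröbner fan of `I`: all nonempty faces of the cones `C_v(I)`, `v ∈ ℝ^n_{>0}`. -/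
noncomputable def GroebnerFan (I : Ideal (MvPolynomial (Fin n) k)) :
    Set (Set (Fin n → ℝ)) :=
  {F | F.Nonempty ∧ ∃ v : Fin n → ℝ, (∀ i, 0 < v i) ∧ IsFaceOf (Cv I v) F}

/-- `G` is a (finite) Gröbner basis of `I` w.r.t. `τ`. -/
def IsGroebnerBasis (τ : TermOrder n) (I : Ideal (MvPolynomial (Fin n) k))
    (G : Set (MvPolynomial (Fin n) k)) : Prop :=
  G.Finite ∧ Ideal.span G = I ∧ τ.initialIdeal I = Ideal.span (τ.initialTerm '' G)

/-- `G` is the reduced Gröbner basis of `I` w.r.t. `τ`. -/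
def IsReducedGroebnerBasis (τ : TermOrder n) (I : Ideal (MvPolynomial (Fin n) k))
    (G : Set (MvPolynomial (Fin n) k)) : Prop :=
  IsGroebnerBasis τ I G ∧
  (∀ g ∈ G, g.coeff (τ.leadExp g) = 1) ∧
  (∀ g ∈ G, ∀ α ∈ g.support, α ≠ τ.leadExp g →
    (monomial α 1 : MvPolynomial (Fin n) k) ∉ τ.initialIdeal I) ∧
  (∀ g ∈ G, Ideal.span (τ.initialTerm '' (G \ {g})) ≠ τ.initialIdeal I)

/-! ### Auxiliary development -/

namespace TermOrder

variable (τ : TermOrder n)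

/-- Reflexive closure of the term order. -/
def tle (a b : Fin n →₀ ℕ) : Prop := τ.lt a b ∨ a = b

lemma tle_refl (a : Fin n →₀ ℕ) : τ.tle a a := Or.inr rfl

lemma lt_of_le_of_lt' {a b c : Fin n →₀ ℕ} (h1 : τ.tle a b) (h2 : τ.lt b c) : τ.lt a c := by
  rcases h1 with h | rfl
  · exact τ.trans _ _ _ h h2
  · exact h2

lemma lt_of_lt_of_le' {a b c : Fin n →₀ ℕ} (h1 : τ.lt a b) (h2 : τ.tle b c) : τ.lt a c := by
  rcases h2 with h | rfl
  · exact τ.trans _ _ _ h1 h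
  · exact h1

lemma tle_trans {a b c : Fin n →₀ ℕ} (h1 : τ.tle a b) (h2 : τ.tle b c) : τ.tle a c := by
  rcases h1 with h | rfl
  · exact Or.inl (τ.lt_of_lt_of_le' h h2)
  · exact h2

lemma add_right_le {a b : Fin n →₀ ℕ} (c : Fin n →₀ ℕ) (h : τ.tle a b) :
    τ.tle (a + c) (b + c) := by
  rcases h with h | rfl
  · exact Or.inl (τ.add_right _ _ _ h)
  · exact Or.inr rfl

lemma add_lt_add' {a b c d : Fin n →₀ ℕ} (h1 : τ.lt a b) (h2 : τ.tle c d) :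
    τ.lt (a + c) (b + d) := by
  have h3 : τ.lt (a + c) (b + c) := τ.add_right _ _ _ h1
  have h4 : τ.tle (b + c) (b + d) := by
    have := τ.add_right_le b h2
    rwa [add_comm c b, add_comm d b] at this
  exact τ.lt_of_lt_of_le' h3 h4

lemma add_le_add' {a b c d : Fin n →₀ ℕ} (h1 : τ.tle a b) (h2 : τ.tle c d) :
    τ.tle (a + c) (b + d) := by
  rcases h1 with h | rfl
  · exact Or.inl (τ.add_lt_add' h h2)
  · have := τ.add_right_le a h2
    rwa [add_comm c a, add_comm d a] at this

lemma le_of_le {a b : Fin n →₀ ℕ} (h : a ≤ b) : τ.tle a b := by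
  rcases eq_or_ne a b with rfl | hne
  · exact τ.tle_refl a
  · have hz : (b - a) ≠ 0 := by
      intro h0
      exact hne (le_antisymm h (tsub_eq_zero_iff_le.1 h0))
    have := τ.add_right 0 (b - a) a (τ.zero_lt _ hz)
    rw [zero_add, tsub_add_cancel_of_le h] at this
    exact Or.inl this

/-- The term order is well-founded, by Dickson's lemma. -/
lemma lt_wf : WellFounded τ.lt := by
  have : IsStrictOrder (Fin n →₀ ℕ) τ.lt :=
    { irrefl := τ.irrefl, trans := τ.trans }
  rw [RelEmbedding.wellFounded_iff_isEmpty]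
  constructor
  intro e
  obtain ⟨i, j, hij, hle⟩ :=
    (wellQuasiOrdered_le (α := Fin n →₀ ℕ)) e
  have h1 : τ.lt (e j) (e i) := e.map_rel_iff.2 hij
  have h2 : τ.tle (e i) (e j) := τ.le_of_le hle
  exact absurd (τ.lt_of_le_of_lt' h2 h1) (τ.irrefl _)

/-- Every nonempty finite set of exponents has a strict `τ`-maximum. -/
lemma exists_max (s : Finset (Fin n →₀ ℕ)) (hs : s.Nonempty) :
    ∃ a ∈ s, ∀ b ∈ s, b ≠ a → τ.lt b a := by
  classical
  induction s using Finset.induction_on with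
  | empty => exact absurd rfl hs.ne_empty
  | @insert a s ha ih =>
    rcases s.eq_empty_or_nonempty with rfl | hs'
    · refine ⟨a, Finset.mem_insert_self _ _, ?_⟩
      intro b hb hne
      rcases Finset.mem_insert.1 hb with rfl | h
      · exact absurd rfl hne
      · exact absurd h (Finset.notMem_empty _)
    · obtain ⟨c, hc, hmax⟩ := ih hs'
      have hac : a ≠ c := fun h => ha (h ▸ hc)
      rcases τ.total a c hac with h | h
      · refine ⟨c, Finset.mem_insert_of_mem hc, ?_⟩
        intro b hb hbc
        rcases Finset.mem_insert.1 hb with rfl | hbs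
        · exact h
        · exact hmax b hbs hbc
      · refine ⟨a, Finset.mem_insert_self _ _, ?_⟩
        intro b hb hba
        rcases Finset.mem_insert.1 hb with rfl | hbs
        · exact absurd rfl hba
        · rcases eq_or_ne b c with rfl | hbc
          · exact h
          · exact τ.trans _ _ _ (hmax b hbs hbc) h

variable {k : Type*} [Field k]

lemma leadExp_spec {f : MvPolynomial (Fin n) k} (hf : f ≠ 0) :
    τ.leadExp f ∈ f.support ∧
      ∀ β ∈ f.support, β ≠ τ.leadExp f → τ.lt β (τ.leadExp f) := by
  have hex : ∃ α, α ∈ f.support ∧ ∀ β ∈ f.support, β ≠ α → τ.lt β α :=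
    τ.exists_max f.support (MvPolynomial.support_nonempty.2 hf)
  rw [TermOrder.leadExp, dif_pos hex]
  exact hex.choose_spec

lemma leadExp_eq_of {f : MvPolynomial (Fin n) k} (hf : f ≠ 0) {a : Fin n →₀ ℕ}
    (ha : a ∈ f.support) (hmax : ∀ β ∈ f.support, β ≠ a → τ.lt β a) :
    τ.leadExp f = a := by
  obtain ⟨h1, h2⟩ := τ.leadExp_spec hf
  by_contra hne
  exact absurd (τ.trans _ _ _ (h2 a ha (fun h => hne h.symm)) (hmax _ h1 hne)) (τ.irrefl _)

lemma coeff_leadExp_ne_zero {f : MvPolynomial (Fin n) k} (hf : f ≠ 0) :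
    f.coeff (τ.leadExp f) ≠ 0 :=
  MvPolynomial.mem_support_iff.1 (τ.leadExp_spec hf).1

end TermOrder
section Wdeg

lemma wdeg_add (ω : Fin n → ℝ) (a b : Fin n →₀ ℕ) :
    wdeg ω (a + b) = wdeg ω a + wdeg ω b := by
  simp only [wdeg, Finsupp.add_apply, Nat.cast_add, mul_add, Finset.sum_add_distrib]

lemma wdeg_tsub (ω : Fin n → ℝ) {a b : Fin n →₀ ℕ} (h : b ≤ a) :
    wdeg ω (a - b) = wdeg ω a - wdeg ω b := by
  have := wdeg_add ω (a - b) b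
  rw [tsub_add_cancel_of_le h] at this
  linarith

lemma wdeg_add_smul (v u : Fin n → ℝ) (ε : ℝ) (a : Fin n →₀ ℕ) :
    wdeg (v + ε • u) a = wdeg v a + ε * wdeg u a := by
  simp only [wdeg, Pi.add_apply, Pi.smul_apply, smul_eq_mul, add_mul, Finset.sum_add_distrib,
    Finset.mul_sum, mul_assoc]

lemma continuous_wdeg (a : Fin n →₀ ℕ) : Continuous (fun ω : Fin n → ℝ => wdeg ω a) := by
  refine continuous_finset_sum _ (fun i _ => ?_)
  exact (continuous_apply i).mul continuous_const

end Wdeg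

section InitialForm

variable {k : Type*} [Field k]

lemma coeff_initialForm (ω : Fin n → ℝ) (f : MvPolynomial (Fin n) k) (γ : Fin n →₀ ℕ) :
    (initialForm ω f).coeff γ =
      if γ ∈ f.support ∧ ∀ β ∈ f.support, wdeg ω β ≤ wdeg ω γ then f.coeff γ else 0 := by
  classical
  rw [initialForm]
  rw [MvPolynomial.coeff_sum]
  simp only [MvPolynomial.coeff_monomial]
  rw [Finset.sum_ite_eq']
  congr 1
  simp [Finset.mem_filter]

lemma mem_support_initialForm {ω : Fin n → ℝ} {f : MvPolynomial (Fin n) k} {γ : Fin n →₀ ℕ} :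
    γ ∈ (initialForm ω f).support ↔
      γ ∈ f.support ∧ ∀ β ∈ f.support, wdeg ω β ≤ wdeg ω γ := by
  classical
  rw [MvPolynomial.mem_support_iff, coeff_initialForm]
  split_ifs with h
  · exact iff_of_true (MvPolynomial.mem_support_iff.1 h.1) h
  · exact iff_of_false (by simp) h

lemma initialForm_zero (ω : Fin n → ℝ) : initialForm ω (0 : MvPolynomial (Fin n) k) = 0 := by
  classical
  ext γ
  rw [coeff_initialForm]
  simp

lemma initialForm_ne_zero (ω : Fin n → ℝ) {f : MvPolynomial (Fin n) k} (hf : f ≠ 0) :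
    initialForm ω f ≠ 0 := by
  obtain ⟨a, ha, hmax⟩ := Finset.exists_max_image f.support (wdeg ω)
    (MvPolynomial.support_nonempty.2 hf)
  intro h0
  have : a ∈ (initialForm ω f).support := mem_support_initialForm.2 ⟨ha, hmax⟩
  rw [h0] at this
  simp at this

/-- If the `τ`-leading exponent of `f` strictly `ω`-dominates the rest of the support,
then `in_ω f = in_τ f`. -/
lemma initialForm_eq_initialTerm (τ : TermOrder n) (ω : Fin n → ℝ)
    {f : MvPolynomial (Fin n) k} (hf : f ≠ 0)
    (h : ∀ β ∈ f.support, β ≠ τ.leadExp f → wdeg ω β < wdeg ω (τ.leadExp f)) :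
    initialForm ω f = τ.initialTerm f := by
  classical
  have hlead := (τ.leadExp_spec hf).1
  ext γ
  rw [coeff_initialForm, TermOrder.initialTerm, MvPolynomial.coeff_monomial]
  rcases eq_or_ne γ (τ.leadExp f) with rfl | hne
  · have h1 : τ.leadExp f ∈ f.support ∧
        ∀ β ∈ f.support, wdeg ω β ≤ wdeg ω (τ.leadExp f) := by
      refine ⟨hlead, fun β hβ => ?_⟩
      rcases eq_or_ne β (τ.leadExp f) with rfl | hb
      · exact le_refl _
      · exact le_of_lt (h β hβ hb)
    rw [if_pos h1, if_pos rfl]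
  · have h2 : ¬(τ.leadExp f = γ) := fun hh => hne hh.symm
    have h3 : ¬(γ ∈ f.support ∧ ∀ β ∈ f.support, wdeg ω β ≤ wdeg ω γ) := by
      rintro ⟨hγ, hmax⟩
      exact absurd (hmax _ hlead) (not_le.2 (h γ hγ hne))
    rw [if_neg h3, if_neg h2]

/-- Key characterization: `in_τ(in_ω f) = in_τ f` iff the `τ`-leading exponent of `f`
maximizes the `ω`-weight over the support of `f`. -/
lemma initialTerm_initialForm_eq_iff (τ : TermOrder n) (ω : Fin n → ℝ)
    {f : MvPolynomial (Fin n) k} (hf : f ≠ 0) :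
    τ.initialTerm (initialForm ω f) = τ.initialTerm f ↔
      ∀ β ∈ f.support, wdeg ω β ≤ wdeg ω (τ.leadExp f) := by
  classical
  constructor
  · intro h β hβ
    have hfne : initialForm ω f ≠ 0 := initialForm_ne_zero ω hf
    have hc : f.coeff (τ.leadExp f) ≠ 0 := τ.coeff_leadExp_ne_zero hf
    -- from the equation, `leadExp f` is in the support of `initialForm ω f`
    have h1 : (initialForm ω f).coeff (τ.leadExp (initialForm ω f)) =
        f.coeff (τ.leadExp f) ∧ τ.leadExp (initialForm ω f) = τ.leadExp f := by
      have := h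
      rw [TermOrder.initialTerm, TermOrder.initialTerm] at this
      rcases (MvPolynomial.monomial_eq_monomial_iff _ _ _ _).1 this with ⟨h1, h2⟩ | ⟨h1, h2⟩
      · exact ⟨h2 ▸ h1 ▸ rfl, h1⟩
      · exact absurd h2 hc
    have hmem : τ.leadExp f ∈ (initialForm ω f).support := by
      rw [← h1.2]
      rw [MvPolynomial.mem_support_iff, h1.1]
      exact hc
    exact (mem_support_initialForm.1 hmem).2 β hβ
  · intro h
    have hlead := (τ.leadExp_spec hf).1
    have hmem : τ.leadExp f ∈ (initialForm ω f).support :=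
      mem_support_initialForm.2 ⟨hlead, h⟩
    have hne : initialForm ω f ≠ 0 := initialForm_ne_zero ω hf
    have hl : τ.leadExp (initialForm ω f) = τ.leadExp f := by
      refine τ.leadExp_eq_of hne hmem (fun β hβ hbne => ?_)
      exact (τ.leadExp_spec hf).2 β (mem_support_initialForm.1 hβ).1 hbne
    rw [TermOrder.initialTerm, TermOrder.initialTerm, hl, coeff_initialForm,
      if_pos ⟨hlead, h⟩]

end InitialForm
section IdealLemmas

variable {k : Type*} [Field k] {τ : TermOrder n} {I : Ideal (MvPolynomial (Fin n) k)}
  {G : Set (MvPolynomial (Fin n) k)}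

lemma initialIdeal_eq_span (hG : IsReducedGroebnerBasis τ I G) :
    τ.initialIdeal I =
      Ideal.span ((fun s => (monomial s (1 : k))) '' (τ.leadExp '' G)) := by
  rw [hG.1.2.2]
  congr 1
  rw [Set.image_image]
  apply Set.image_congr
  intro g hg
  rw [TermOrder.initialTerm, hG.2.1 g hg]

lemma mem_initialIdeal_iff (hG : IsReducedGroebnerBasis τ I G)
    {p : MvPolynomial (Fin n) k} :
    p ∈ τ.initialIdeal I ↔ ∀ xi ∈ p.support, ∃ g ∈ G, τ.leadExp g ≤ xi := by
  rw [initialIdeal_eq_span hG, MvPolynomial.mem_ideal_span_monomial_image]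
  constructor
  · intro h xi hxi
    obtain ⟨si, hsi, hle⟩ := h xi hxi
    obtain ⟨g, hg, rfl⟩ := hsi
    exact ⟨g, hg, hle⟩
  · intro h xi hxi
    obtain ⟨g, hg, hle⟩ := h xi hxi
    exact ⟨τ.leadExp g, ⟨g, hg, rfl⟩, hle⟩

lemma monomial_one_mem_initialIdeal (hG : IsReducedGroebnerBasis τ I G)
    {α : Fin n →₀ ℕ} (h : ∃ g ∈ G, τ.leadExp g ≤ α) :
    (monomial α (1 : k)) ∈ τ.initialIdeal I := by
  rw [mem_initialIdeal_iff hG]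
  intro xi hxi
  classical
  rw [MvPolynomial.support_monomial] at hxi
  rw [if_neg (one_ne_zero)] at hxi
  rw [Finset.mem_singleton] at hxi
  exact hxi ▸ h

lemma ne_zero_of_mem_G (hG : IsReducedGroebnerBasis τ I G)
    {g : MvPolynomial (Fin n) k} (hg : g ∈ G) : g ≠ 0 := by
  intro h0
  have := hG.2.1 g hg
  rw [h0] at this
  simp at this

lemma mem_I_of_mem_G (hG : IsReducedGroebnerBasis τ I G)
    {g : MvPolynomial (Fin n) k} (hg : g ∈ G) : g ∈ I := by
  rw [← hG.1.2.1]
  exact Ideal.subset_span hg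

/-- Points where `in_u(I) = in_τ(I)` satisfy the weight inequalities for every `g ∈ G`. -/
lemma weight_ineq_of_initialFormIdeal_eq (hG : IsReducedGroebnerBasis τ I G)
    (u : Fin n → ℝ) (hu : initialFormIdeal u I = τ.initialIdeal I) :
    ∀ g ∈ G, ∀ β ∈ g.support, wdeg u β ≤ wdeg u (τ.leadExp g) := by
  intro g hg
  by_contra hcon
  push_neg at hcon
  obtain ⟨β₀, hβ₀, hlt⟩ := hcon
  have hgI : g ∈ I := mem_I_of_mem_G hG hg
  have hg0 : g ≠ 0 := ne_zero_of_mem_G hG hg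
  have hq : initialForm u g ∈ τ.initialIdeal I := by
    rw [← hu]
    exact Ideal.subset_span ⟨g, hgI, rfl⟩
  have hq0 : initialForm u g ≠ 0 := initialForm_ne_zero u hg0
  obtain ⟨α, hα⟩ := (MvPolynomial.support_nonempty.2 hq0)
  obtain ⟨hαg, hαmax⟩ := mem_support_initialForm.1 hα
  have hαne : α ≠ τ.leadExp g := by
    intro heq
    rw [heq] at hαmax
    exact absurd (hαmax β₀ hβ₀) (not_le.2 hlt)
  have hdvd := (mem_initialIdeal_iff hG).1 hq α hα
  exact hG.2.2.1 g hg α hαg hαne (monomial_one_mem_initialIdeal hG hdvd)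

/-- The weight-inequality locus is closed. -/
lemma isClosed_weight_set (τ : TermOrder n) (G : Set (MvPolynomial (Fin n) k)) :
    IsClosed {v : Fin n → ℝ |
      ∀ g ∈ G, ∀ β ∈ g.support, wdeg v β ≤ wdeg v (τ.leadExp g)} := by
  have : {v : Fin n → ℝ | ∀ g ∈ G, ∀ β ∈ g.support, wdeg v β ≤ wdeg v (τ.leadExp g)} =
      ⋂ (g : MvPolynomial (Fin n) k), ⋂ (_ : g ∈ G), ⋂ (β : Fin n →₀ ℕ),
        ⋂ (_ : β ∈ g.support), {v : Fin n → ℝ | wdeg v β ≤ wdeg v (τ.leadExp g)} := by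
    ext v
    simp only [Set.mem_iInter, Set.mem_setOf_eq]
  rw [this]
  exact isClosed_iInter fun g => isClosed_iInter fun _ => isClosed_iInter fun β =>
    isClosed_iInter fun _ => isClosed_le (continuous_wdeg β) (continuous_wdeg _)

end IdealLemmas
section KeyInduction

variable {k : Type*} [Field k] {τ : TermOrder n} {I : Ideal (MvPolynomial (Fin n) k)}
  {G : Set (MvPolynomial (Fin n) k)}

lemma strict_sel_weight (hG : IsReducedGroebnerBasis τ I G) {u : Fin n → ℝ}
    {g : MvPolynomial (Fin n) k} (hg : g ∈ G)
    (hsel : initialForm u g = τ.initialTerm g) :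
    ∀ β ∈ g.support, β ≠ τ.leadExp g → wdeg u β < wdeg u (τ.leadExp g) := by
  classical
  intro β hβ hne
  have hg0 : g ≠ 0 := ne_zero_of_mem_G hG hg
  have hm : τ.leadExp g ∈ (initialForm u g).support := by
    rw [hsel, TermOrder.initialTerm, MvPolynomial.support_monomial,
      if_neg (τ.coeff_leadExp_ne_zero hg0)]
    exact Finset.mem_singleton_self _
  have hmmax := (mem_support_initialForm.1 hm).2
  have hβn : β ∉ (initialForm u g).support := by
    rw [hsel, TermOrder.initialTerm, MvPolynomial.support_monomial,
      if_neg (τ.coeff_leadExp_ne_zero hg0)]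
    simpa using hne
  have hnm : ¬(∀ δ ∈ g.support, wdeg u δ ≤ wdeg u β) :=
    fun hmax => hβn (mem_support_initialForm.2 ⟨hβ, hmax⟩)
  push_neg at hnm
  obtain ⟨δ, hδ, hδlt⟩ := hnm
  exact lt_of_lt_of_le hδlt (hmmax δ hδ)

/-- The key lemma: if `in_u g = in_τ g` for every `g` in a reduced Gröbner basis, then
`in_u f ∈ in_τ(I)` for every `f ∈ I`. -/
lemma initialForm_mem_initialIdeal (hG : IsReducedGroebnerBasis τ I G) (u : Fin n → ℝ)
    (hsel : ∀ g ∈ G, initialForm u g = τ.initialTerm g) :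
    ∀ f ∈ I, initialForm u f ∈ τ.initialIdeal I := by
  classical
  have main : ∀ d : Fin n →₀ ℕ, ∀ f, f ∈ I → f ≠ 0 → τ.leadExp f = d →
      initialForm u f ∈ τ.initialIdeal I := by
    refine fun d => (τ.lt_wf).induction
      (C := fun d => ∀ f, f ∈ I → f ≠ 0 → τ.leadExp f = d →
        initialForm u f ∈ τ.initialIdeal I) d ?_
    rintro d IH f hfI hf0 rfl
    have hlamf : τ.leadExp f ∈ f.support := (τ.leadExp_spec hf0).1
    have hlammax := (τ.leadExp_spec hf0).2
    set lam := τ.leadExp f with hlamdef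
    have hc0 : f.coeff lam ≠ 0 := τ.coeff_leadExp_ne_zero hf0
    set c := f.coeff lam with hcdef
    -- divisibility of `lam` by some leading exponent
    have hlin : τ.initialTerm f ∈ τ.initialIdeal I :=
      Ideal.subset_span ⟨f, hfI, hf0, rfl⟩
    obtain ⟨g, hgG, hmle⟩ : ∃ g ∈ G, τ.leadExp g ≤ lam := by
      refine (mem_initialIdeal_iff hG).1 hlin lam ?_
      rw [TermOrder.initialTerm, MvPolynomial.support_monomial, if_neg hc0]
      exact Finset.mem_singleton_self _
    have hg0 : g ≠ 0 := ne_zero_of_mem_G hG hgG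
    have hgc : g.coeff (τ.leadExp g) = 1 := hG.2.1 g hgG
    have hglead := τ.leadExp_spec hg0
    have hgw := strict_sel_weight hG hgG (hsel g hgG)
    set m := τ.leadExp g with hmdef
    set f' := f - (monomial (lam - m) c) * g with hf'def
    have hf'I : f' ∈ I := I.sub_mem hfI (I.mul_mem_left _ (mem_I_of_mem_G hG hgG))
    have hmono_mem : (monomial lam c : MvPolynomial (Fin n) k) ∈ τ.initialIdeal I := by
      have h1 : (monomial m (1 : k)) ∈ τ.initialIdeal I :=
        monomial_one_mem_initialIdeal hG ⟨g, hgG, le_refl _⟩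
      have h2 : (monomial lam c : MvPolynomial (Fin n) k)
          = monomial (lam - m) c * monomial m 1 := by
        rw [MvPolynomial.monomial_mul, mul_one, tsub_add_cancel_of_le hmle]
      rw [h2]
      exact Ideal.mul_mem_left _ _ h1
    have htg_coeff : ∀ γ, ((monomial (lam - m) c) * g).coeff γ =
        if lam - m ≤ γ then c * g.coeff (γ - (lam - m)) else 0 := fun γ =>
      MvPolynomial.coeff_monomial_mul' _ _ _ _
    have htg_supp : ∀ γ ∈ ((monomial (lam - m) c) * g).support,
        ∃ β ∈ g.support, γ = (lam - m) + β := by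
      intro γ hγ
      rw [MvPolynomial.mem_support_iff, htg_coeff] at hγ
      by_cases hle : lam - m ≤ γ
      · rw [if_pos hle] at hγ
        refine ⟨γ - (lam - m), ?_, ?_⟩
        · rw [MvPolynomial.mem_support_iff]
          intro h0
          rw [h0, mul_zero] at hγ
          exact hγ rfl
        · have h3 : (lam - m) + (γ - (lam - m)) = γ := by
            rw [add_comm]; exact tsub_add_cancel_of_le hle
          exact h3.symm
      · rw [if_neg hle] at hγ
        exact absurd rfl hγ
    have htg_w : ∀ γ ∈ ((monomial (lam - m) c) * g).support,
        γ = lam ∨ wdeg u γ < wdeg u lam := by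
      intro γ hγ
      obtain ⟨β, hβ, rfl⟩ := htg_supp γ hγ
      rcases eq_or_ne β m with rfl | hbm
      · left
        exact tsub_add_cancel_of_le hmle
      · right
        rw [wdeg_add, wdeg_tsub u hmle]
        have := hgw β hβ hbm
        linarith
    have htg_τ : ∀ γ ∈ ((monomial (lam - m) c) * g).support,
        γ = lam ∨ τ.lt γ lam := by
      intro γ hγ
      obtain ⟨β, hβ, rfl⟩ := htg_supp γ hγ
      rcases eq_or_ne β m with rfl | hbm
      · left
        exact tsub_add_cancel_of_le hmle
      · right
        have h1 : τ.lt β m := hglead.2 β hβ hbm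
        have h2 := τ.add_right β m (lam - m) h1
        rwa [add_comm β (lam - m), add_comm m (lam - m), tsub_add_cancel_of_le hmle] at h2
    have hf'lam : f'.coeff lam = 0 := by
      have h3 : lam - (lam - m) = m := tsub_tsub_cancel_of_le hmle
      rw [hf'def, MvPolynomial.coeff_sub, htg_coeff lam, if_pos tsub_le_self, h3, hgc,
        mul_one, ← hcdef, sub_self]
    have hf'coeff : ∀ γ, γ ≠ lam → ¬(wdeg u γ < wdeg u lam) → f'.coeff γ = f.coeff γ := by
      intro γ hγne hγw
      rw [hf'def, MvPolynomial.coeff_sub]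
      have h4 : ((monomial (lam - m) c) * g).coeff γ = 0 := by
        by_contra hne0
        rcases htg_w γ (MvPolynomial.mem_support_iff.2 hne0) with h | h
        · exact hγne h
        · exact hγw h
      rw [h4, sub_zero]
    have hf'supp : f'.support ⊆ f.support ∪ ((monomial (lam - m) c) * g).support := by
      rw [hf'def]
      exact MvPolynomial.support_sub _ _ _
    have hlam_nmem : lam ∉ f'.support := by
      rw [MvPolynomial.mem_support_iff, hf'lam]
      exact fun h => h rfl
    have hf'τ : ∀ γ ∈ f'.support, τ.lt γ lam := by
      intro γ hγ
      have hγlam : γ ≠ lam := fun h => hlam_nmem (h ▸ hγ)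
      rcases Finset.mem_union.1 (hf'supp hγ) with h | h
      · exact hlammax γ h hγlam
      · rcases htg_τ γ h with h' | h'
        · exact absurd h' hγlam
        · exact h'
    have hIH : initialForm u f' ∈ τ.initialIdeal I := by
      rcases eq_or_ne f' 0 with h0 | h0
      · rw [h0, initialForm_zero]
        exact Ideal.zero_mem _
      · exact IH (τ.leadExp f') (hf'τ _ (τ.leadExp_spec h0).1) f' hf'I h0 rfl
    by_cases hmax : ∀ β ∈ f.support, wdeg u β ≤ wdeg u lam
    · have hPflam : lam ∈ f.support ∧ ∀ β ∈ f.support, wdeg u β ≤ wdeg u lam :=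
        ⟨hlamf, hmax⟩
      by_cases hex : ∃ α ∈ f.support, α ≠ lam ∧ wdeg u α = wdeg u lam
      · obtain ⟨α₁, hα₁f, hα₁ne, hα₁w⟩ := hex
        have hα₁f' : α₁ ∈ f'.support := by
          rw [MvPolynomial.mem_support_iff,
            hf'coeff α₁ hα₁ne (by rw [hα₁w]; exact lt_irrefl _)]
          exact MvPolynomial.mem_support_iff.1 hα₁f
        have hf'bound : ∀ δ ∈ f'.support, wdeg u δ ≤ wdeg u lam := by
          intro δ hδ
          rcases Finset.mem_union.1 (hf'supp hδ) with h | h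
          · exact hmax δ h
          · rcases htg_w δ h with h' | h'
            · exact le_of_eq (by rw [h'])
            · exact le_of_lt h'
        have hkey : initialForm u f = initialForm u f' + monomial lam c := by
          ext γ
          rw [MvPolynomial.coeff_add, coeff_initialForm, coeff_initialForm,
            MvPolynomial.coeff_monomial]
          rcases eq_or_ne γ lam with rfl | hγne
          · have hPf'γ : ¬(lam ∈ f'.support ∧ ∀ δ ∈ f'.support, wdeg u δ ≤ wdeg u lam) :=
              fun h => hlam_nmem h.1
            rw [if_pos hPflam, if_neg hPf'γ, if_pos rfl, zero_add, hcdef]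
          · rw [if_neg (show ¬lam = γ from fun h => hγne h.symm), add_zero]
            by_cases hPf : γ ∈ f.support ∧ ∀ β ∈ f.support, wdeg u β ≤ wdeg u γ
            · have hweq : wdeg u γ = wdeg u lam :=
                le_antisymm (hmax γ hPf.1) (hPf.2 lam hlamf)
              have hcoeq : f'.coeff γ = f.coeff γ :=
                hf'coeff γ hγne (by rw [hweq]; exact lt_irrefl _)
              have hPf' : γ ∈ f'.support ∧ ∀ δ ∈ f'.support, wdeg u δ ≤ wdeg u γ := by
                refine ⟨?_, fun δ hδ => ?_⟩
                · rw [MvPolynomial.mem_support_iff, hcoeq]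
                  exact MvPolynomial.mem_support_iff.1 hPf.1
                · rw [hweq]
                  exact hf'bound δ hδ
              rw [if_pos hPf, if_pos hPf', hcoeq]
            · have hPf' : ¬(γ ∈ f'.support ∧ ∀ δ ∈ f'.support, wdeg u δ ≤ wdeg u γ) := by
                rintro ⟨hγf', hγmax⟩
                have h1 : wdeg u γ ≤ wdeg u lam := hf'bound γ hγf'
                have h2 : wdeg u lam ≤ wdeg u γ := by
                  rw [← hα₁w]
                  exact hγmax α₁ hα₁f'
                have hcoeq : f'.coeff γ = f.coeff γ := hf'coeff γ hγne (not_lt.2 h2)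
                apply hPf
                refine ⟨?_, fun β hβ => le_trans (hmax β hβ) h2⟩
                rw [MvPolynomial.mem_support_iff, ← hcoeq]
                exact MvPolynomial.mem_support_iff.1 hγf'
              rw [if_neg hPf, if_neg hPf']
        rw [hkey]
        exact Ideal.add_mem _ hIH hmono_mem
      · have hkey : initialForm u f = monomial lam c := by
          ext γ
          rw [coeff_initialForm, MvPolynomial.coeff_monomial]
          rcases eq_or_ne γ lam with rfl | hγne
          · rw [if_pos hPflam, if_pos rfl, hcdef]
          · rw [if_neg (show ¬lam = γ from fun h => hγne h.symm), if_neg]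
            rintro ⟨hγf, hγmax⟩
            exact hex ⟨γ, hγf, hγne, le_antisymm (hmax γ hγf) (hγmax lam hlamf)⟩
        rw [hkey]
        exact hmono_mem
    · push_neg at hmax
      obtain ⟨β₁, hβ₁, hβ₁w⟩ := hmax
      obtain ⟨β₀, hβ₀f, hβ₀max⟩ := Finset.exists_max_image f.support (wdeg u)
        (MvPolynomial.support_nonempty.2 hf0)
      have hβ₀lam : wdeg u lam < wdeg u β₀ := lt_of_lt_of_le hβ₁w (hβ₀max β₁ hβ₁)
      have hβ₀ne : β₀ ≠ lam := by
        intro h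
        rw [h] at hβ₀lam
        exact lt_irrefl _ hβ₀lam
      have hβ₀f' : β₀ ∈ f'.support := by
        rw [MvPolynomial.mem_support_iff, hf'coeff β₀ hβ₀ne (not_lt.2 (le_of_lt hβ₀lam))]
        exact MvPolynomial.mem_support_iff.1 hβ₀f
      have hf'bound2 : ∀ δ ∈ f'.support, wdeg u δ ≤ wdeg u β₀ := by
        intro δ hδ
        rcases Finset.mem_union.1 (hf'supp hδ) with h | h
        · exact hβ₀max δ h
        · rcases htg_w δ h with h' | h'
          · rw [h']
            exact le_of_lt hβ₀lam
          · exact le_of_lt (lt_trans h' hβ₀lam)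
      have hkey : initialForm u f' = initialForm u f := by
        ext γ
        rw [coeff_initialForm, coeff_initialForm]
        by_cases hPf : γ ∈ f.support ∧ ∀ β ∈ f.support, wdeg u β ≤ wdeg u γ
        · have h2 : wdeg u β₀ ≤ wdeg u γ := hPf.2 β₀ hβ₀f
          have hγne : γ ≠ lam := by
            intro h
            rw [h] at h2
            linarith
          have hcoeq : f'.coeff γ = f.coeff γ :=
            hf'coeff γ hγne (not_lt.2 (le_trans (le_of_lt hβ₀lam) h2))
          have hPf' : γ ∈ f'.support ∧ ∀ δ ∈ f'.support, wdeg u δ ≤ wdeg u γ := by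
            refine ⟨?_, fun δ hδ => le_trans (hf'bound2 δ hδ) h2⟩
            rw [MvPolynomial.mem_support_iff, hcoeq]
            exact MvPolynomial.mem_support_iff.1 hPf.1
          rw [if_pos hPf, if_pos hPf', hcoeq]
        · have hPf' : ¬(γ ∈ f'.support ∧ ∀ δ ∈ f'.support, wdeg u δ ≤ wdeg u γ) := by
            rintro ⟨hγf', hγmax⟩
            have h2 : wdeg u β₀ ≤ wdeg u γ := hγmax β₀ hβ₀f'
            have hγne : γ ≠ lam := by
              intro h
              rw [h] at h2
              linarith
            have hcoeq : f'.coeff γ = f.coeff γ :=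
              hf'coeff γ hγne (not_lt.2 (le_trans (le_of_lt hβ₀lam) h2))
            apply hPf
            refine ⟨?_, fun β hβ => le_trans (hβ₀max β hβ) h2⟩
            rw [MvPolynomial.mem_support_iff, ← hcoeq]
            exact MvPolynomial.mem_support_iff.1 hγf'
          rw [if_neg hPf', if_neg hPf]
      rw [← hkey]
      exact hIH
  intro f hfI
  rcases eq_or_ne f 0 with rfl | hf0
  · rw [initialForm_zero]
    exact Ideal.zero_mem _
  · exact main (τ.leadExp f) f hfI hf0 rfl

/-- Under strict selection, `in_u(I) = in_τ(I)`. -/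
lemma initialFormIdeal_eq_of_sel (hG : IsReducedGroebnerBasis τ I G) (u : Fin n → ℝ)
    (hsel : ∀ g ∈ G, initialForm u g = τ.initialTerm g) :
    initialFormIdeal u I = τ.initialIdeal I := by
  apply le_antisymm
  · rw [initialFormIdeal]
    rw [Ideal.span_le]
    rintro p ⟨f, hfI, rfl⟩
    exact initialForm_mem_initialIdeal hG u hsel f hfI
  · rw [hG.1.2.2, Ideal.span_le]
    rintro p ⟨g, hgG, rfl⟩
    rw [← hsel g hgG]
    exact Ideal.subset_span ⟨g, mem_I_of_mem_G hG hgG, rfl⟩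

end KeyInduction
section OrderSums

namespace TermOrder

variable (τ : TermOrder n)

lemma nsmul_le {a b : Fin n →₀ ℕ} (h : τ.tle a b) : ∀ kk : ℕ, τ.tle (kk • a) (kk • b) := by
  intro kk
  induction kk with
  | zero => simp only [zero_smul]; exact τ.tle_refl 0
  | succ m ih =>
    rw [succ_nsmul, succ_nsmul]
    exact τ.add_le_add' ih h

lemma nsmul_lt {a b : Fin n →₀ ℕ} (h : τ.lt a b) {kk : ℕ} (hk : kk ≠ 0) :
    τ.lt (kk • a) (kk • b) := by
  cases kk with
  | zero => exact absurd rfl hk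
  | succ m =>
    rw [succ_nsmul, succ_nsmul]
    have h2 := τ.add_lt_add' h (τ.nsmul_le (Or.inl h) m)
    rwa [add_comm a (m • a), add_comm b (m • b)] at h2

lemma sum_lt_sum {ι : Type*} (s : Finset ι) (F Gg : ι → (Fin n →₀ ℕ))
    (hs : s.Nonempty) (h : ∀ j ∈ s, τ.lt (F j) (Gg j)) :
    τ.lt (∑ j ∈ s, F j) (∑ j ∈ s, Gg j) := by
  classical
  have H : ∀ t : Finset ι, t.Nonempty → (∀ j ∈ t, τ.lt (F j) (Gg j)) →
      τ.lt (∑ j ∈ t, F j) (∑ j ∈ t, Gg j) := by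
    intro t
    induction t using Finset.induction_on with
    | empty => exact fun ht _ => absurd rfl ht.ne_empty
    | @insert a t ha ih =>
      intro _ hlt
      rw [Finset.sum_insert ha, Finset.sum_insert ha]
      rcases t.eq_empty_or_nonempty with rfl | ht'
      · simpa using τ.add_lt_add' (hlt a (Finset.mem_insert_self a _)) (τ.tle_refl 0)
      · exact τ.add_lt_add' (hlt a (Finset.mem_insert_self a _))
          (Or.inl (ih ht' (fun j hj => hlt j (Finset.mem_insert_of_mem hj))))
  exact H s hs h

end TermOrder

end OrderSums

section RationalSpan

/-- A rational vector in the real span of finitely many rational vectors lies in their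
rational span. -/
lemma rational_span {κ : Type*} [Fintype κ] [DecidableEq κ] {ι : Type*}
    (v : ι → (κ → ℚ)) (b : κ → ℚ)
    (h : (fun i => ((b i : ℚ) : ℝ)) ∈ Submodule.span ℝ
      (Set.range (fun j => fun i => ((v j i : ℚ) : ℝ)))) :
    b ∈ Submodule.span ℚ (Set.range v) := by
  classical
  by_contra hb
  set W := Submodule.span ℚ (Set.range v) with hW
  have hbq : (Submodule.Quotient.mk b : (κ → ℚ) ⧸ W) ≠ 0 := by
    simpa [Submodule.Quotient.mk_eq_zero] using hb
  obtain ⟨ψ, hψ⟩ : ∃ ψ : Module.Dual ℚ ((κ → ℚ) ⧸ W), ψ (Submodule.Quotient.mk b) ≠ 0 := by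
    by_contra hcon
    push_neg at hcon
    exact hbq ((Module.forall_dual_apply_eq_zero_iff ℚ _).1 hcon)
  set φ : (κ → ℚ) →ₗ[ℚ] ℚ := ψ.comp W.mkQ with hφ
  have hφb : φ b ≠ 0 := hψ
  have hφv : ∀ j, φ (v j) = 0 := by
    intro j
    have hvj : v j ∈ W := Submodule.subset_span (Set.mem_range_self j)
    have : W.mkQ (v j) = 0 := (Submodule.Quotient.mk_eq_zero W).2 hvj
    rw [hφ, LinearMap.comp_apply, this, map_zero]
  set φR : (κ → ℝ) →ₗ[ℝ] ℝ :=
    ∑ i, ((φ (fun j' => if i = j' then 1 else 0) : ℚ) : ℝ) • LinearMap.proj i with hφR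
  have hcast : ∀ q : κ → ℚ, φR (fun i => ((q i : ℚ) : ℝ)) = ((φ q : ℚ) : ℝ) := by
    intro q
    have h1 : φ q = ∑ i, q i • φ (fun j' => if i = j' then 1 else 0) :=
      LinearMap.pi_apply_eq_sum_univ φ q
    rw [h1, hφR]
    rw [LinearMap.sum_apply]
    push_cast
    apply Finset.sum_congr rfl
    intro i _
    rw [LinearMap.smul_apply, LinearMap.proj_apply]
    simp only [smul_eq_mul]
    push_cast
    ring
  have hker : Submodule.span ℝ (Set.range fun j => fun i => ((v j i : ℚ) : ℝ)) ≤
      LinearMap.ker φR := by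
    rw [Submodule.span_le]
    rintro x ⟨j, rfl⟩
    rw [SetLike.mem_coe, LinearMap.mem_ker, hcast (v j), hφv j]
    exact Rat.cast_zero
  have h2 := hker h
  rw [LinearMap.mem_ker, hcast b] at h2
  exact hφb (by exact_mod_cast h2)

end RationalSpan
section ExistsWeight

lemma exists_weight (τ : TermOrder n) (Q : Finset ((Fin n →₀ ℕ) × (Fin n →₀ ℕ)))
    (hQ : ∀ p ∈ Q, τ.lt p.1 p.2) :
    ∃ w : Fin n → ℝ, ∀ p ∈ Q, wdeg w p.1 < wdeg w p.2 := by
  classical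
  set D : Set (Fin n → ℝ) := (fun p : (Fin n →₀ ℕ) × (Fin n →₀ ℕ) =>
    (fun i => ((p.2 i : ℝ) - (p.1 i : ℝ)))) '' (Q : Set _) with hD
  have hDfin : D.Finite := Q.finite_toSet.image _
  have h0 : (0 : Fin n → ℝ) ∉ convexHull ℝ D := by
    intro hmem
    obtain ⟨ι, hfin, z, wt, hzD, haff, hwpos, hwsum, hwcomb⟩ :=
      eq_pos_convex_span_of_mem_convexHull hmem
    have hne : Nonempty ι := by
      by_contra hcon
      rw [not_nonempty_iff] at hcon
      haveI := hcon
      rw [Finset.univ_eq_empty, Finset.sum_empty] at hwsum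
      exact zero_ne_one hwsum
    have hz' : ∀ j : ι, ∃ p : (Fin n →₀ ℕ) × (Fin n →₀ ℕ), p ∈ Q ∧
        z j = fun i => ((p.2 i : ℝ) - (p.1 i : ℝ)) := by
      intro j
      obtain ⟨p, hp, he⟩ := hzD (Set.mem_range_self j)
      exact ⟨p, hp, he.symm⟩
    choose P hPQ hPz using hz'
    set vq : ι → (Option (Fin n) → ℚ) := fun j o =>
      Option.casesOn o 1 (fun i => ((P j).2 i : ℚ) - ((P j).1 i : ℚ)) with hvq
    set bq : Option (Fin n) → ℚ := fun o => Option.casesOn o 1 0 with hbqdef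
    have hcastv : ∀ (j : ι) (i : Fin n), ((vq j (some i) : ℚ) : ℝ) = z j i := by
      intro j i
      rw [hPz j]
      simp only [hvq]
      push_cast
      ring
    have hbcomb : (fun o => ((bq o : ℚ) : ℝ)) =
        ∑ j, wt j • (fun o => ((vq j o : ℚ) : ℝ)) := by
      funext o
      rw [Finset.sum_apply]
      cases o with
      | none =>
        simp only [hbqdef, hvq, Pi.smul_apply, smul_eq_mul, Rat.cast_one, mul_one]
        exact hwsum.symm
      | some i =>
        have hcomb := congrFun hwcomb i
        rw [Finset.sum_apply] at hcomb
        simp only [Pi.smul_apply, smul_eq_mul, Pi.zero_apply] at hcomb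
        simp only [hbqdef, Pi.smul_apply, smul_eq_mul, Pi.zero_apply, Rat.cast_zero]
        rw [← hcomb]
        apply Finset.sum_congr rfl
        intro j _
        rw [hcastv j i]
    have hmem' : (fun o => ((bq o : ℚ) : ℝ)) ∈ Submodule.span ℝ
        (Set.range (fun j => fun o => ((vq j o : ℚ) : ℝ))) := by
      rw [hbcomb]
      exact Submodule.sum_mem _ (fun j _ =>
        Submodule.smul_mem _ _ (Submodule.subset_span (Set.mem_range_self j)))
    have hbq2 : bq ∈ Submodule.span ℚ (Set.range vq) := rational_span vq bq hmem'
    obtain ⟨cq, hcq⟩ := (Submodule.mem_span_range_iff_exists_fun ℚ).1 hbq2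
    have hccomb : ∑ j, ((cq j : ℚ) : ℝ) • (fun o => ((vq j o : ℚ) : ℝ)) =
        (fun o => ((bq o : ℚ) : ℝ)) := by
      funext o
      rw [Finset.sum_apply]
      have h5 := congrFun hcq o
      rw [Finset.sum_apply] at h5
      simp only [Pi.smul_apply, smul_eq_mul] at h5 ⊢
      exact_mod_cast h5
    have hli : LinearIndependent ℝ (fun j => fun o => ((vq j o : ℚ) : ℝ)) := by
      rw [Fintype.linearIndependent_iff]
      intro gc hg j
      have hnone := congrFun hg none
      rw [Finset.sum_apply] at hnone
      simp only [Pi.smul_apply, smul_eq_mul, Pi.zero_apply] at hnone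
      have hsum0 : ∑ j', gc j' = 0 := by
        simpa [hvq] using hnone
      have hcomb0 : ∑ j', gc j' • z j' = 0 := by
        funext i
        have hsome := congrFun hg (some i)
        rw [Finset.sum_apply] at hsome
        simp only [Pi.smul_apply, smul_eq_mul, Pi.zero_apply] at hsome
        rw [Finset.sum_apply, Pi.zero_apply]
        simp only [Pi.smul_apply, smul_eq_mul]
        rw [← hsome]
        apply Finset.sum_congr rfl
        intro j' _
        rw [hcastv j' i]
      exact affineIndependent_iff.1 haff Finset.univ gc hsum0 hcomb0 j (Finset.mem_univ j)
    have hcw : ∀ j, ((cq j : ℚ) : ℝ) = wt j := by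
      intro j
      have hz0 : ∑ j', (((cq j' : ℚ) : ℝ) - wt j') • (fun o => ((vq j' o : ℚ) : ℝ)) = 0 := by
        simp only [sub_smul]
        rw [Finset.sum_sub_distrib, hccomb, hbcomb, sub_self]
      have h6 := Fintype.linearIndependent_iff.1 hli _ hz0 j
      linarith [h6]
    have hcqpos : ∀ j, 0 < cq j := by
      intro j
      have h1 := hwpos j
      rw [← hcw j] at h1
      exact_mod_cast h1
    set N : ℕ := ∏ j, (cq j).den with hN
    have hNpos : 0 < N := Finset.prod_pos (fun j _ => (cq j).den_pos)
    have hdvd : ∀ j, (cq j).den ∣ N := fun j => Finset.dvd_prod_of_mem _ (Finset.mem_univ j)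
    have hknat : ∀ j : ι, ∃ kk : ℕ, ((kk : ℚ)) = cq j * N ∧ kk ≠ 0 := by
      intro j
      obtain ⟨r, hr⟩ := hdvd j
      have hrne : r ≠ 0 := by
        rintro rfl
        rw [mul_zero] at hr
        omega
      refine ⟨(cq j).num.toNat * r, ?_, ?_⟩
      · have h9 : (((cq j).num.toNat : ℕ) : ℚ) = ((cq j).num : ℚ) := by
          exact_mod_cast congrArg (fun z : ℤ => (z : ℚ))
            (Int.toNat_of_nonneg (Rat.num_nonneg.2 (le_of_lt (hcqpos j))))
        rw [hr]
        push_cast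
        rw [h9, ← Rat.mul_den_eq_num (cq j)]
        ring
      · have hnum0 : (cq j).num.toNat ≠ 0 := by
          have := Rat.num_pos.2 (hcqpos j)
          omega
        exact Nat.mul_ne_zero hnum0 hrne
    choose K hK hK0 using hknat
    have hAB : (∑ j, K j • (P j).1) = (∑ j, K j • (P j).2) := by
      ext i
      rw [Finset.sum_apply', Finset.sum_apply']
      simp only [Finsupp.smul_apply, smul_eq_mul]
      have hq0 : ∑ j, cq j * (((P j).2 i : ℚ) - ((P j).1 i : ℚ)) = 0 := by
        have h5 := congrFun hcq (some i)
        rw [Finset.sum_apply] at h5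
        simp only [Pi.smul_apply, smul_eq_mul] at h5
        simpa [hvq, hbqdef] using h5
      have hcastq : ((∑ j, K j * (P j).1 i : ℕ) : ℚ) = ((∑ j, K j * (P j).2 i : ℕ) : ℚ) := by
        push_cast
        have h6 : ∑ j, (K j : ℚ) * (((P j).2 i : ℚ) - ((P j).1 i : ℚ)) = 0 := by
          calc ∑ j, (K j : ℚ) * (((P j).2 i : ℚ) - ((P j).1 i : ℚ))
              = ∑ j, (N : ℚ) * (cq j * (((P j).2 i : ℚ) - ((P j).1 i : ℚ))) := by
                apply Finset.sum_congr rfl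
                intro j _
                rw [hK j]
                ring
            _ = (N : ℚ) * ∑ j, cq j * (((P j).2 i : ℚ) - ((P j).1 i : ℚ)) := by
                rw [Finset.mul_sum]
            _ = 0 := by rw [hq0, mul_zero]
        simp only [mul_sub] at h6
        rw [Finset.sum_sub_distrib] at h6
        linarith
      exact_mod_cast hcastq
    have hlt : τ.lt (∑ j, K j • (P j).1) (∑ j, K j • (P j).2) := by
      apply τ.sum_lt_sum Finset.univ _ _ Finset.univ_nonempty
      intro j _
      exact τ.nsmul_lt (hQ (P j) (hPQ j)) (hK0 j)
    rw [hAB] at hlt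
    exact τ.irrefl _ hlt
  obtain ⟨φ, u, hu1, hu2⟩ := geometric_hahn_banach_closed_point
    (convex_convexHull ℝ D) (hDfin.isCompact_convexHull (𝕜 := ℝ)).isClosed h0
  set w : Fin n → ℝ := fun i => -φ (fun j => if i = j then 1 else 0) with hw
  refine ⟨w, ?_⟩
  intro p hp
  have hd : (fun i => ((p.2 i : ℝ) - (p.1 i : ℝ))) ∈ convexHull ℝ D :=
    subset_convexHull ℝ D ⟨p, hp, rfl⟩
  have hu0 : u < 0 := by simpa using hu2
  have h1 : φ (fun i => ((p.2 i : ℝ) - (p.1 i : ℝ))) < 0 := lt_trans (hu1 _ hd) hu0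
  have h2 : φ (fun i => ((p.2 i : ℝ) - (p.1 i : ℝ))) =
      ∑ i, ((p.2 i : ℝ) - (p.1 i : ℝ)) * φ (fun j => if i = j then 1 else 0) := by
    have h3 := LinearMap.pi_apply_eq_sum_univ
      (φ.toLinearMap) (fun i => ((p.2 i : ℝ) - (p.1 i : ℝ)))
    simpa [smul_eq_mul] using h3
  rw [wdeg, wdeg, ← sub_pos, ← Finset.sum_sub_distrib]
  have h4 : ∑ i, (w i * (p.2 i : ℝ) - w i * (p.1 i : ℝ))
      = - φ (fun i => ((p.2 i : ℝ) - (p.1 i : ℝ))) := by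
    rw [h2, ← Finset.sum_neg_distrib]
    apply Finset.sum_congr rfl
    intro i _
    rw [hw]
    ring
  rw [h4]
  linarith

end ExistsWeight
/-- `v ∈ C_≺(I)` iff `in_≺(in_v(g)) = in_≺(g)` for every `g` in the reduced
Gröbner basis `G_≺(I)`. -/
theorem mem_Cprec_iff (τ : TermOrder n) (I : Ideal (MvPolynomial (Fin n) k))
    (G : Set (MvPolynomial (Fin n) k)) (hG : IsReducedGroebnerBasis τ I G)
    (v : Fin n → ℝ) :
    v ∈ Cprec τ I ↔ ∀ g ∈ G, τ.initialTerm (initialForm v g) = τ.initialTerm g := by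
  classical
  constructor
  · intro hv g hg
    have hg0 : g ≠ 0 := ne_zero_of_mem_G hG hg
    rw [initialTerm_initialForm_eq_iff τ v hg0]
    have hsub : {u : Fin n → ℝ | initialFormIdeal u I = τ.initialIdeal I} ⊆
        {u : Fin n → ℝ | ∀ g ∈ G, ∀ β ∈ g.support, wdeg u β ≤ wdeg u (τ.leadExp g)} :=
      fun u hu => weight_ineq_of_initialFormIdeal_eq hG u hu
    have hcl := closure_minimal hsub (isClosed_weight_set τ G)
    exact hcl hv g hg
  · intro hT
    have hvw : ∀ g ∈ G, ∀ β ∈ g.support, wdeg v β ≤ wdeg v (τ.leadExp g) := by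
      intro g hg
      exact (initialTerm_initialForm_eq_iff τ v (ne_zero_of_mem_G hG hg)).1 (hT g hg)
    set Q : Finset ((Fin n →₀ ℕ) × (Fin n →₀ ℕ)) :=
      (hG.1.1.toFinset).biUnion (fun g => (g.support.erase (τ.leadExp g)).image
        (fun β => (β, τ.leadExp g))) with hQdef
    have hQlt : ∀ p ∈ Q, τ.lt p.1 p.2 := by
      intro p hp
      rw [hQdef, Finset.mem_biUnion] at hp
      obtain ⟨g, hgF, hpg⟩ := hp
      rw [Finset.mem_image] at hpg
      obtain ⟨β, hβ, rfl⟩ := hpg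
      have hgG : g ∈ G := (Set.Finite.mem_toFinset _).1 hgF
      have hg0 : g ≠ 0 := ne_zero_of_mem_G hG hgG
      exact (τ.leadExp_spec hg0).2 β (Finset.mem_of_mem_erase hβ) (Finset.ne_of_mem_erase hβ)
    obtain ⟨w0, hw0⟩ := exists_weight τ Q hQlt
    have hS : ∀ ε : ℝ, 0 < ε → initialFormIdeal (v + ε • w0) I = τ.initialIdeal I := by
      intro ε hε
      apply initialFormIdeal_eq_of_sel hG
      intro g hgG
      have hg0 : g ≠ 0 := ne_zero_of_mem_G hG hgG
      apply initialForm_eq_initialTerm τ _ hg0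
      intro β hβ hne
      have h1 : wdeg v β ≤ wdeg v (τ.leadExp g) := hvw g hgG β hβ
      have h2 : wdeg w0 β < wdeg w0 (τ.leadExp g) := by
        have hpQ : (β, τ.leadExp g) ∈ Q := by
          rw [hQdef, Finset.mem_biUnion]
          exact ⟨g, (Set.Finite.mem_toFinset _).2 hgG,
            Finset.mem_image.2 ⟨β, Finset.mem_erase.2 ⟨hne, hβ⟩, rfl⟩⟩
        exact hw0 _ hpQ
      rw [wdeg_add_smul, wdeg_add_smul]
      nlinarith
    have hmem : v ∈ closure {u : Fin n → ℝ | initialFormIdeal u I = τ.initialIdeal I} := by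
      rw [mem_closure_iff_seq_limit]
      refine ⟨fun j => v + (1 / ((j : ℝ) + 1)) • w0, fun j => hS _ (by positivity), ?_⟩
      have h1 : Filter.Tendsto (fun j : ℕ => (1 / ((j : ℝ) + 1))) Filter.atTop (nhds 0) :=
        tendsto_one_div_add_atTop_nhds_zero_nat
      have h2 : Filter.Tendsto (fun j : ℕ => v + (1 / ((j : ℝ) + 1)) • w0) Filter.atTop
          (nhds (v + (0 : ℝ) • w0)) :=
        Filter.Tendsto.add tendsto_const_nhds (h1.smul_const w0)
      simpa using h2
    exact hmem
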